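/- Let $V(\omega,\tilde g) = \frac12\langle M\omega,\omega\rangle + \frac12\sum_{i,j=1}^3 \alpha_i \tilde g_{ij}^2$ where $M\in\mathbb{R}^{3\times3}$ is symmetric positive definite and $\alpha_i>0$. Along solutions of the rigid-body system $M\dot\omega = -\omega\times(M\omega) + f$ coupled with the perturbed Poisson equations (20) for $\tilde g_{ij}$, the feedback $f_1 = -k\omega_1 + (\omega\times M\omega)_1 + \alpha_2\tilde g_{23} - \alpha_3\tilde g_{32}$, $f_2 = -k\omega_2 + (\omega\times M\omega)_2 - \alpha_1\tilde g_{13} + \alpha_3\tilde g_{31}$, $f_3 = -k\omega_3 + (\omega\times M\omega)_3 + \alpha_1\tilde g_{12} - \alpha_2\tilde g_{21}$ yields $\dot V = -k(\omega_1^2+\omega_2^2+\omega_3^2) \le 0$. -/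

import Mathlib

/-- the cross product of two vectors of `ℝ³` -/
noncomputable def cross (a b : Fin 3 → ℝ) : Fin 3 → ℝ :=
  ![a 1 * b 2 - a 2 * b 1, a 2 * b 0 - a 0 * b 2, a 0 * b 1 - a 1 * b 0]

/-- For the rigid-body system `Mω̇ = -ω × (Mω) + f` coupled with the perturbed Poisson
equations (20), the feedback
`f₁ = -kω₁ + (ω×Mω)₁ + α₂g̃₂₃ - α₃g̃₃₂`, `f₂ = -kω₂ + (ω×Mω)₂ - α₁g̃₁₃ + α₃g̃₃₁`,
`f₃ = -kω₃ + (ω×Mω)₃ + α₁g̃₁₂ - α₂g̃₂₁`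
yields `V̇ = -k(ω₁² + ω₂² + ω₃²) ≤ 0` for the Lyapunov function
`V = ½⟨Mω, ω⟩ + ½ ∑ᵢⱼ αᵢ g̃ᵢⱼ²`.  (Indices are `0`-based in this formalization.) -/
theorem statement_7 (M : Matrix (Fin 3) (Fin 3) ℝ) (hM : M.PosDef) (hMsymm : M.IsSymm)
    (α : Fin 3 → ℝ) (hα : ∀ i, 0 < α i) (k : ℝ) (hk : 0 < k)
    (ω ωd f : ℝ → Fin 3 → ℝ) (gt : ℝ → Fin 3 → Fin 3 → ℝ)
    (hωd : ∀ t, HasDerivAt ω (ωd t) t)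
    -- rigid-body equation  M ω̇ = -ω × (Mω) + f
    (heq : ∀ t, M.mulVec (ωd t) = -(cross (ω t) (M.mulVec (ω t))) + f t)
    -- perturbed Poisson equations (20)
    (h11 : ∀ t, HasDerivAt (fun s => gt s 0 0) (ω t 2 * gt t 0 1 - ω t 1 * gt t 0 2) t)
    (h12 : ∀ t, HasDerivAt (fun s => gt s 0 1) (ω t 0 * gt t 0 2 - ω t 2 * (gt t 0 0 + 1)) t)
    (h13 : ∀ t, HasDerivAt (fun s => gt s 0 2) (ω t 1 * (gt t 0 0 + 1) - ω t 0 * gt t 0 1) t)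
    (h21 : ∀ t, HasDerivAt (fun s => gt s 1 0) (ω t 2 * (gt t 1 1 + 1) - ω t 1 * gt t 1 2) t)
    (h22 : ∀ t, HasDerivAt (fun s => gt s 1 1) (ω t 0 * gt t 1 2 - ω t 2 * gt t 1 0) t)
    (h23 : ∀ t, HasDerivAt (fun s => gt s 1 2) (ω t 1 * gt t 1 0 - ω t 0 * (gt t 1 1 + 1)) t)
    (h31 : ∀ t, HasDerivAt (fun s => gt s 2 0) (ω t 2 * gt t 2 1 - ω t 1 * (gt t 2 2 + 1)) t)
    (h32 : ∀ t, HasDerivAt (fun s => gt s 2 1) (ω t 0 * (gt t 2 2 + 1) - ω t 2 * gt t 2 0) t)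
    (h33 : ∀ t, HasDerivAt (fun s => gt s 2 2) (ω t 1 * gt t 2 0 - ω t 0 * gt t 2 1) t)
    -- the feedback law
    (hf : ∀ t, f t =
      ![-k * ω t 0 + cross (ω t) (M.mulVec (ω t)) 0 + α 1 * gt t 1 2 - α 2 * gt t 2 1,
        -k * ω t 1 + cross (ω t) (M.mulVec (ω t)) 1 - α 0 * gt t 0 2 + α 2 * gt t 2 0,
        -k * ω t 2 + cross (ω t) (M.mulVec (ω t)) 2 + α 0 * gt t 0 1 - α 1 * gt t 1 0])
    (V : ℝ → ℝ)
    (hV : ∀ t, V t = (1 / 2) * (dotProduct (M.mulVec (ω t)) (ω t)) +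
      (1 / 2) * ∑ i, ∑ j, α i * gt t i j ^ 2) :
    ∀ t, HasDerivAt V (-k * (ω t 0 ^ 2 + ω t 1 ^ 2 + ω t 2 ^ 2)) t ∧
      -k * (ω t 0 ^ 2 + ω t 1 ^ 2 + ω t 2 ^ 2) ≤ 0 := by
  have hVfun : V = fun s => 1 / 2 *
        ((M 0 0 * ω s 0 + M 0 1 * ω s 1 + M 0 2 * ω s 2) * ω s 0 +
            (M 1 0 * ω s 0 + M 1 1 * ω s 1 + M 1 2 * ω s 2) * ω s 1 +
          (M 2 0 * ω s 0 + M 2 1 * ω s 1 + M 2 2 * ω s 2) * ω s 2) +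
      1 / 2 *
        (α 0 * gt s 0 0 ^ 2 + α 0 * gt s 0 1 ^ 2 + α 0 * gt s 0 2 ^ 2 +
            (α 1 * gt s 1 0 ^ 2 + α 1 * gt s 1 1 ^ 2 + α 1 * gt s 1 2 ^ 2) +
          (α 2 * gt s 2 0 ^ 2 + α 2 * gt s 2 1 ^ 2 + α 2 * gt s 2 2 ^ 2)) := by
    funext s
    rw [hV s]
    simp only [dotProduct, Matrix.mulVec, Fin.sum_univ_three]
  intro t
  have hω : ∀ i, HasDerivAt (fun s => ω s i) (ωd t i) t := fun i => hasDerivAt_pi.1 (hωd t) i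
  have e0 := congrFun (heq t) 0
  have e1 := congrFun (heq t) 1
  have e2 := congrFun (heq t) 2
  simp only [Matrix.mulVec, dotProduct, cross, hf, Fin.sum_univ_three, Pi.add_apply,
    Pi.neg_apply, Matrix.cons_val_zero, Matrix.cons_val_one, Matrix.head_cons,
    Matrix.cons_val_two, Matrix.tail_cons] at e0 e1 e2
  constructor
  · rw [hVfun]
    have Hq : HasDerivAt (fun s =>
        (M 0 0 * ω s 0 + M 0 1 * ω s 1 + M 0 2 * ω s 2) * ω s 0 +
            (M 1 0 * ω s 0 + M 1 1 * ω s 1 + M 1 2 * ω s 2) * ω s 1 +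
          (M 2 0 * ω s 0 + M 2 1 * ω s 1 + M 2 2 * ω s 2) * ω s 2)
        ((M 0 0 * ωd t 0 + M 0 1 * ωd t 1 + M 0 2 * ωd t 2) * ω t 0 +
            (M 0 0 * ω t 0 + M 0 1 * ω t 1 + M 0 2 * ω t 2) * ωd t 0 +
          ((M 1 0 * ωd t 0 + M 1 1 * ωd t 1 + M 1 2 * ωd t 2) * ω t 1 +
            (M 1 0 * ω t 0 + M 1 1 * ω t 1 + M 1 2 * ω t 2) * ωd t 1) +
          ((M 2 0 * ωd t 0 + M 2 1 * ωd t 1 + M 2 2 * ωd t 2) * ω t 2 +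
            (M 2 0 * ω t 0 + M 2 1 * ω t 1 + M 2 2 * ω t 2) * ωd t 2)) t := by
      exact (((((hω 0).const_mul (M 0 0)).add ((hω 1).const_mul (M 0 1))).add
          ((hω 2).const_mul (M 0 2))).mul (hω 0)).add
        (((((hω 0).const_mul (M 1 0)).add ((hω 1).const_mul (M 1 1))).add
          ((hω 2).const_mul (M 1 2))).mul (hω 1)) |>.add
        (((((hω 0).const_mul (M 2 0)).add ((hω 1).const_mul (M 2 1))).add
          ((hω 2).const_mul (M 2 2))).mul (hω 2))
    have Hg : HasDerivAt (fun s =>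
        α 0 * gt s 0 0 ^ 2 + α 0 * gt s 0 1 ^ 2 + α 0 * gt s 0 2 ^ 2 +
            (α 1 * gt s 1 0 ^ 2 + α 1 * gt s 1 1 ^ 2 + α 1 * gt s 1 2 ^ 2) +
          (α 2 * gt s 2 0 ^ 2 + α 2 * gt s 2 1 ^ 2 + α 2 * gt s 2 2 ^ 2))
        (α 0 * (2 * gt t 0 0 ^ 1 * (ω t 2 * gt t 0 1 - ω t 1 * gt t 0 2)) +
          α 0 * (2 * gt t 0 1 ^ 1 * (ω t 0 * gt t 0 2 - ω t 2 * (gt t 0 0 + 1))) +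
          α 0 * (2 * gt t 0 2 ^ 1 * (ω t 1 * (gt t 0 0 + 1) - ω t 0 * gt t 0 1)) +
          (α 1 * (2 * gt t 1 0 ^ 1 * (ω t 2 * (gt t 1 1 + 1) - ω t 1 * gt t 1 2)) +
           α 1 * (2 * gt t 1 1 ^ 1 * (ω t 0 * gt t 1 2 - ω t 2 * gt t 1 0)) +
           α 1 * (2 * gt t 1 2 ^ 1 * (ω t 1 * gt t 1 0 - ω t 0 * (gt t 1 1 + 1)))) +
          (α 2 * (2 * gt t 2 0 ^ 1 * (ω t 2 * gt t 2 1 - ω t 1 * (gt t 2 2 + 1))) +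
           α 2 * (2 * gt t 2 1 ^ 1 * (ω t 0 * (gt t 2 2 + 1) - ω t 2 * gt t 2 0)) +
           α 2 * (2 * gt t 2 2 ^ 1 * (ω t 1 * gt t 2 0 - ω t 0 * gt t 2 1)))) t := by
      exact (((((h11 t).pow 2).const_mul (α 0)).add (((h12 t).pow 2).const_mul (α 0))).add
          (((h13 t).pow 2).const_mul (α 0))).add
        ((((h21 t).pow 2).const_mul (α 1)).add (((h22 t).pow 2).const_mul (α 1)) |>.add
          (((h23 t).pow 2).const_mul (α 1))) |>.add
        ((((h31 t).pow 2).const_mul (α 2)).add (((h32 t).pow 2).const_mul (α 2)) |>.add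
          (((h33 t).pow 2).const_mul (α 2)))
    have H := (Hq.const_mul (1 / 2 : ℝ)).add (Hg.const_mul (1 / 2 : ℝ))
    have m10 : M 1 0 = M 0 1 := hMsymm.apply 0 1
    have m20 : M 2 0 = M 0 2 := hMsymm.apply 0 2
    have m21 : M 2 1 = M 1 2 := hMsymm.apply 1 2
    rw [m10, m20, m21] at e1 e2
    refine H.congr_deriv (Eq.symm ?_)
    rw [m10, m20, m21]
    linear_combination (-(ω t 0)) * e0 - (ω t 1) * e1 - (ω t 2) * e2
  · nlinarith [sq_nonneg (ω t 0), sq_nonneg (ω t 1), sq_nonneg (ω t 2)]
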